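/- Let V be a complex inner product space on which a Lie algebra g with orthonormal basis {e_A} acts by anti-Hermitian operators, with the bi-invariance property ⟨[a,b],c⟩_g + ⟨b,[a,c]⟩_g = 0. Define the g-valued bilinear form ⟦φ¹,φ²⟧ := (1/2) Σ_A (⟨e_A·φ¹, φ²⟩ + ⟨φ², e_A·φ¹⟩) e_A. Then ⟦·,·⟧ is antisymmetric: ⟦φ¹,φ²⟧ = −⟦φ²,φ¹⟧, and for any connection 1-form A and vector field X, the covariant Leibniz rule holds: D_X ⟦φ¹,φ²⟧ = ⟦D_X φ¹, φ²⟧ + ⟦φ¹, D_X φ²⟧, where D_X acts on g-valued functions by the adjoint action and on V-valued functions by the given representation. -/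
import Mathlib


open scoped InnerProductSpace

noncomputable section

/-- Minkowski space `ℝ^{1+2}`, in rectilinear coordinates. -/
abbrev Spacetime : Type := Fin 3 → ℝ

/-- **Antisymmetry and covariant Leibniz rule for the form `⟦·,·⟧`.**
`g` is a real Lie algebra (bracket encoded as an antisymmetric bilinear map `bracket`
satisfying the Jacobi identity) with a positive-definite inner product obeying the
bi-invariance identity, `{e_A}` an orthonormal basis, and `V` a complex Hermitian
vector space on which `g` acts by anti-Hermitian operators via a representation `ρ`.
With `⟦φ¹,φ²⟧ := (1/2) Σ_A (⟨e_A·φ¹, φ²⟩ + ⟨φ², e_A·φ¹⟩) e_A`, the form `⟦·,·⟧` is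
antisymmetric, and for any connection 1-form `A` and vector field `X` the covariant
Leibniz rule `D_X ⟦φ¹,φ²⟧ = ⟦D_X φ¹, φ²⟧ + ⟦φ¹, D_X φ²⟧` holds, where `D_X` acts on
`g`-valued functions via the adjoint action and on `V`-valued functions via `ρ`. -/
theorem stmt13
    {g : Type*} [NormedAddCommGroup g] [InnerProductSpace ℝ g] [FiniteDimensional ℝ g]
    {V : Type*} [NormedAddCommGroup V] [InnerProductSpace ℂ V]
    {ι : Type*} [Fintype ι] [DecidableEq ι]
    (bracket : g →ₗ[ℝ] g →ₗ[ℝ] g)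
    (hbskew : ∀ a b : g, bracket a b = -bracket b a)
    (hjacobi : ∀ a b c : g,
      bracket a (bracket b c) = bracket (bracket a b) c + bracket b (bracket a c))
    (hinv : ∀ a b c : g, ⟪bracket a b, c⟫_ℝ + ⟪b, bracket a c⟫_ℝ = 0)
    (e : OrthonormalBasis ι ℝ g)
    (ρ : g →ₗ[ℝ] (V →L[ℂ] V))
    (hrep : ∀ a b : g, ρ (bracket a b) = ρ a ∘L ρ b - ρ b ∘L ρ a)
    (hanti : ∀ (a : g) (v w : V), ⟪(ρ a) v, w⟫_ℂ = -⟪v, (ρ a) w⟫_ℂ)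
    (bbrk : V → V → g)
    (hbbrk : ∀ v w : V, bbrk v w =
      ∑ A, ((1 / 2 : ℝ) * (⟪(ρ (e A)) v, w⟫_ℂ + ⟪w, (ρ (e A)) v⟫_ℂ).re) • e A)
    (Aconn : Spacetime → Fin 3 → g) (X : Spacetime → Fin 3 → ℝ)
    (φ₁ φ₂ : Spacetime → V)
    (hφ₁ : Differentiable ℝ φ₁) (hφ₂ : Differentiable ℝ φ₂) :
    (∀ v w : V, bbrk v w = -bbrk w v) ∧
    (∀ x : Spacetime,
      fderiv ℝ (fun y => bbrk (φ₁ y) (φ₂ y)) x (X x) +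
          bracket (∑ μ, X x μ • Aconn x μ) (bbrk (φ₁ x) (φ₂ x)) =
        bbrk (fderiv ℝ φ₁ x (X x) + (ρ (∑ μ, X x μ • Aconn x μ)) (φ₁ x)) (φ₂ x) +
          bbrk (φ₁ x) (fderiv ℝ φ₂ x (X x) + (ρ (∑ μ, X x μ • Aconn x μ)) (φ₂ x))) := by
  have hb2 : ∀ v w : V, bbrk v w = ∑ A, (⟪(ρ (e A)) v, w⟫_ℂ).re • e A := by
    intro v w
    rw [hbbrk]
    refine Finset.sum_congr rfl fun A _ => ?_
    congr 1
    have hz : ⟪w, (ρ (e A)) v⟫_ℂ = starRingEnd ℂ ⟪(ρ (e A)) v, w⟫_ℂ :=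
      (inner_conj_symm w ((ρ (e A)) v)).symm
    rw [hz]
    simp only [Complex.add_re, Complex.conj_re]
    ring
  have key : ∀ (b : g) (v w : V), ⟪b, bbrk v w⟫_ℝ = (⟪(ρ b) v, w⟫_ℂ).re := by
    intro b v w
    conv_lhs => rw [hb2]
    rw [inner_sum]
    simp only [real_inner_smul_right]
    conv_rhs => rw [← e.sum_repr' b]
    rw [map_sum]
    simp only [ContinuousLinearMap.coe_sum', ContinuousLinearMap.sum_apply, Finset.sum_apply,
      sum_inner, Complex.re_sum]
    refine Finset.sum_congr rfl fun i _ => ?_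
    rw [map_smul]
    have : (⟪e i, b⟫_ℝ • ρ (e i)) v = ⟪e i, b⟫_ℝ • (ρ (e i)) v := rfl
    rw [this, RCLike.real_smul_eq_coe_smul (K := ℂ), inner_smul_left, real_inner_comm]
    simp [Complex.conj_ofReal, Complex.mul_re]
    ring
  have hasymm : ∀ v w : V, bbrk v w = -bbrk w v := by
    intro v w
    refine ext_inner_left ℝ fun b => ?_
    rw [inner_neg_right, key, key]
    have h1 : ⟪(ρ b) w, v⟫_ℂ = -(starRingEnd ℂ) ⟪(ρ b) v, w⟫_ℂ := by
      rw [hanti b w v, inner_conj_symm]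
    rw [h1]
    simp only [neg_neg, Complex.neg_re, Complex.conj_re]
  have haddl : ∀ u v w : V, bbrk (u + v) w = bbrk u w + bbrk v w := by
    intro u v w
    refine ext_inner_left ℝ fun b => ?_
    simp [key, inner_add_right, inner_add_left, Complex.add_re]
  have haddr : ∀ u v w : V, bbrk u (v + w) = bbrk u v + bbrk u w := by
    intro u v w
    refine ext_inner_left ℝ fun b => ?_
    simp [key, inner_add_right, Complex.add_re]
  have hequiv : ∀ (a : g) (v w : V),
      bracket a (bbrk v w) = bbrk ((ρ a) v) w + bbrk v ((ρ a) w) := by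
    intro a v w
    refine ext_inner_left ℝ fun b => ?_
    have h1 : ⟪b, bracket a (bbrk v w)⟫_ℝ = -⟪bracket a b, bbrk v w⟫_ℝ := by
      have := hinv a (bbrk v w) b
      have h2 := real_inner_comm b (bracket a (bbrk v w))
      have h3 := real_inner_comm (bracket a b) (bbrk v w)
      linarith [real_inner_comm (bbrk v w) (bracket a b)]
    rw [inner_add_right, h1, key, key, key, hrep]
    have h4 : ⟪((ρ a).comp (ρ b) - (ρ b).comp (ρ a)) v, w⟫_ℂ =
        ⟪(ρ a) ((ρ b) v), w⟫_ℂ - ⟪(ρ b) ((ρ a) v), w⟫_ℂ := by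
      simp [inner_sub_left]
    rw [h4, hanti a ((ρ b) v) w]
    have h5 : ⟪(ρ b) v, (ρ a) w⟫_ℂ = -⟪(ρ a) ((ρ b) v), w⟫_ℂ := by
      rw [hanti a ((ρ b) v) w, neg_neg]
    rw [h5]
    simp only [Complex.sub_re, Complex.neg_re]
    ring
  have hderiv : ∀ (ψ₁ ψ₂ : Spacetime → V), Differentiable ℝ ψ₁ → Differentiable ℝ ψ₂ →
      ∀ (x d : Spacetime),
      fderiv ℝ (fun y => bbrk (ψ₁ y) (ψ₂ y)) x d =
        bbrk (fderiv ℝ ψ₁ x d) (ψ₂ x) + bbrk (ψ₁ x) (fderiv ℝ ψ₂ x d) := by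
    intro ψ₁ ψ₂ hψ₁ hψ₂ x d
    have hfun : (fun y => bbrk (ψ₁ y) (ψ₂ y)) =
        fun y => ∑ A, (⟪(ρ (e A)) (ψ₁ y), ψ₂ y⟫_ℂ).re • e A := funext fun y => hb2 _ _
    rw [hfun]
    have hL : ∀ A, HasFDerivAt (fun y => (ρ (e A)) (ψ₁ y))
        (((ρ (e A)).restrictScalars ℝ).comp (fderiv ℝ ψ₁ x)) x := fun A =>
      (((ρ (e A)).restrictScalars ℝ).hasFDerivAt).comp x (hψ₁ x).hasFDerivAt
    have hF : ∀ A, DifferentiableAt ℝ (fun y => ⟪(ρ (e A)) (ψ₁ y), ψ₂ y⟫_ℂ) x := fun A =>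
      DifferentiableAt.inner ℂ (hL A).differentiableAt (hψ₂ x)
    have hc : ∀ A, DifferentiableAt ℝ (fun y => (⟪(ρ (e A)) (ψ₁ y), ψ₂ y⟫_ℂ).re) x := fun A =>
      (Complex.reCLM.hasFDerivAt.comp x (hF A).hasFDerivAt).differentiableAt
    rw [fderiv_fun_sum fun A _ => (hc A).smul_const (e A)]
    rw [ContinuousLinearMap.sum_apply]
    have hterm : ∀ A, (fderiv ℝ (fun y => (⟪(ρ (e A)) (ψ₁ y), ψ₂ y⟫_ℂ).re • e A) x) d =
        ((⟪(ρ (e A)) (fderiv ℝ ψ₁ x d), ψ₂ x⟫_ℂ).re +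
          (⟪(ρ (e A)) (ψ₁ x), fderiv ℝ ψ₂ x d⟫_ℂ).re) • e A := by
      intro A
      rw [fderiv_smul_const (hc A) (e A)]
      rw [ContinuousLinearMap.smulRight_apply]
      congr 1
      have hre : fderiv ℝ (fun y => (⟪(ρ (e A)) (ψ₁ y), ψ₂ y⟫_ℂ).re) x =
          Complex.reCLM.comp (fderiv ℝ (fun y => ⟪(ρ (e A)) (ψ₁ y), ψ₂ y⟫_ℂ) x) :=
        (Complex.reCLM.hasFDerivAt.comp x (hF A).hasFDerivAt).fderiv
      rw [hre, ContinuousLinearMap.comp_apply]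
      rw [fderiv_inner_apply ℂ (hL A).differentiableAt (hψ₂ x) d]
      rw [(hL A).fderiv]
      simp only [ContinuousLinearMap.comp_apply, ContinuousLinearMap.coe_restrictScalars',
        Complex.reCLM_apply, Complex.add_re]
      ring
    calc ∑ A, (fderiv ℝ (fun y => (⟪(ρ (e A)) (ψ₁ y), ψ₂ y⟫_ℂ).re • e A) x) d
        = ∑ A, (((⟪(ρ (e A)) (fderiv ℝ ψ₁ x d), ψ₂ x⟫_ℂ).re) • e A +
            ((⟪(ρ (e A)) (ψ₁ x), fderiv ℝ ψ₂ x d⟫_ℂ).re) • e A) := by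
          refine Finset.sum_congr rfl fun A _ => ?_
          rw [hterm A, add_smul]
      _ = bbrk (fderiv ℝ ψ₁ x d) (ψ₂ x) + bbrk (ψ₁ x) (fderiv ℝ ψ₂ x d) := by
          rw [Finset.sum_add_distrib, ← hb2, ← hb2]
  refine ⟨hasymm, fun x => ?_⟩
  rw [hderiv φ₁ φ₂ hφ₁ hφ₂ x (X x), hequiv, haddl, haddr]
  abel
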